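/- Let Q = [-1/2,1/2]², let v_j ∈ C¹(Q) with v_j → 0 in W^{1,1}(Q), let P(x₁,x₂) = x₁, Δ > 0, and A_j := {x ∈ Q : |v_j(x)| > Δ}. Then the one-dimensional Lebesgue measure of P(A_j) tends to 0 as j → ∞. -/

import Mathlib

open Set Filter MeasureTheory

/-- The unit square Q = [-1/2,1/2]². -/
def Qsq : Set (ℝ × ℝ) := Icc (-1/2, -1/2) (1/2, 1/2)

namespace Stmt18Aux

noncomputable section

def II : Set ℝ := Icc (-(1/2) : ℝ) (1/2)

lemma Qsq_eq : Qsq = II ×ˢ II := by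
  rw [Qsq, Icc_prod_eq]
  norm_num [II]

lemma interior_Qsq : interior Qsq = Ioo (-(1/2) : ℝ) (1/2) ×ˢ Ioo (-(1/2) : ℝ) (1/2) := by
  rw [Qsq_eq, interior_prod_eq, II, interior_Icc]

lemma measII : volume II = 1 := by
  rw [II, Real.volume_Icc]; norm_num

lemma convexQ : Convex ℝ Qsq := convex_Icc _ _

lemma uniqueDiffQ : UniqueDiffOn ℝ Qsq := by
  apply uniqueDiffOn_convex convexQ
  rw [interior_Qsq]
  exact ⟨(0, 0), by norm_num, by norm_num⟩

lemma frontier_null : volume (Qsq \ interior Qsq) = 0 := by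
  apply measure_mono_null (t := frontier Qsq)
  · intro x hx
    exact ⟨subset_closure hx.1, hx.2⟩
  · exact convexQ.addHaar_frontier volume

set_option maxHeartbeats 2000000 in
lemma key (v : ℝ × ℝ → ℝ) {Δ : ℝ} (hΔ : 0 < Δ) (hC1 : ContDiffOn ℝ 1 v Qsq) :
    volume (Prod.fst '' {x ∈ Qsq | Δ < |v x|}) ≤
      ENNReal.ofReal ((2 / Δ) * ∫ x in Qsq, (|v x| + ‖fderiv ℝ v x‖)) := by
  set F : ℝ × ℝ → ℝ := fun x => |v x| + ‖fderiv ℝ v x‖ with hF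
  -- integrability of F on Qsq
  have hcQ : IsCompact Qsq := isCompact_Icc
  have h1 : IntegrableOn (fun x => |v x|) Qsq := by
    exact (hC1.continuousOn.abs).integrableOn_compact hcQ
  have hmQ : MeasurableSet Qsq := by unfold Qsq; exact measurableSet_Icc
  have haeint : ∀ᵐ x ∂(volume.restrict Qsq), x ∈ interior Qsq := by
    rw [ae_restrict_iff' hmQ]
    have : volume (Qsq \ interior Qsq) = 0 := frontier_null
    filter_upwards [measure_eq_zero_iff_ae_notMem.mp this] with x hx hxQ
    by_contra h
    exact hx ⟨hxQ, h⟩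
  have hae : ∀ᵐ x ∂(volume.restrict Qsq),
      ‖fderivWithin ℝ v Qsq x‖ = ‖fderiv ℝ v x‖ := by
    filter_upwards [haeint] with x hx
    rw [fderivWithin_of_mem_nhds (mem_interior_iff_mem_nhds.mp hx)]
  have h2 : IntegrableOn (fun x => ‖fderiv ℝ v x‖) Qsq := by
    have h2' : IntegrableOn (fun x => ‖fderivWithin ℝ v Qsq x‖) Qsq :=
      ((hC1.continuousOn_fderivWithin uniqueDiffQ le_rfl).norm).integrableOn_compact hcQ
    exact h2'.congr_fun_ae hae
  have hFint : IntegrableOn F Qsq := h1.add h2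
  have measII' : MeasurableSet II := by unfold II; exact measurableSet_Icc
  have compactII : IsCompact II := isCompact_Icc
  -- Fubini setup
  set μI := (volume : Measure ℝ).restrict II with hμI
  set g : ℝ → ℝ := fun x₁ => ∫ x₂ in II, F (x₁, x₂) with hg
  have hprod : IntegrableOn F (II ×ˢ II) ((volume : Measure ℝ).prod volume) := by
    rw [Qsq_eq] at hFint
    rwa [Measure.volume_eq_prod] at hFint
  have hres : Integrable F (μI.prod μI) := by
    rw [hμI, Measure.prod_restrict]
    exact hprod
  have hslice : ∀ᵐ x₁ ∂μI, Integrable (fun x₂ => F (x₁, x₂)) μI := hres.prod_right_ae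
  have hgint : Integrable g μI := hres.integral_prod_left
  have hFub : ∫ x in Qsq, F x = ∫ x₁, g x₁ ∂μI := by
    rw [Qsq_eq, Measure.volume_eq_prod, setIntegral_prod _ hprod]
  have hg0 : ∀ x₁, 0 ≤ g x₁ := fun x₁ =>
    integral_nonneg fun x₂ => add_nonneg (abs_nonneg _) (norm_nonneg _)
  have hIoo_ae : ∀ᵐ x₁ ∂μI, x₁ ∈ Ioo (-(1/2) : ℝ) (1/2) := by
    have h : μI = volume.restrict (Ioo (-(1/2) : ℝ) (1/2)) :=
      (Measure.restrict_congr_set Ioo_ae_eq_Icc).symm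
    rw [h]
    exact ae_restrict_mem measurableSet_Ioo
  -- main pointwise estimate
  have hmain : ∀ᵐ x₁ ∂μI, x₁ ∈ Prod.fst '' {x ∈ Qsq | Δ < |v x|} → Δ / 2 ≤ g x₁ := by
    filter_upwards [hslice, hIoo_ae] with x₁ hsl hx₁ hmem
    obtain ⟨x, ⟨hxQ, hxv⟩, rfl⟩ := hmem
    rw [Qsq_eq] at hxQ
    have hx1II : x.1 ∈ II := hxQ.1
    have hx2II : x.2 ∈ II := hxQ.2
    have hvx : ContinuousOn (fun t => v (x.1, t)) II := by
      apply hC1.continuousOn.comp ((Continuous.prodMk_right x.1).continuousOn)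
      intro t ht
      rw [Qsq_eq]
      exact ⟨hx1II, ht⟩
    have hvint : IntegrableOn (fun t => |v (x.1, t)|) II :=
      (hvx.abs).integrableOn_compact compactII
    have hfdint : IntegrableOn (fun t => ‖fderiv ℝ v (x.1, t)‖) II := by
      have h := hsl.sub hvint
      refine h.congr (Filter.Eventually.of_forall fun t => ?_)
      simp [hF]
    have hintle : ∫ t in II, ‖fderiv ℝ v (x.1, t)‖ ≤ g x.1 :=
      setIntegral_mono_on hfdint hsl measII'
        (fun t _ => le_add_of_nonneg_left (abs_nonneg _))
    by_cases hcase : ∀ t ∈ II, Δ / 2 < |v (x.1, t)|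
    · have hle1 : ∫ t in II, |v (x.1, t)| ≤ g x.1 :=
        setIntegral_mono_on hvint hsl measII'
          (fun t _ => le_add_of_nonneg_right (norm_nonneg _))
      have hge : Δ / 2 * (volume II).toReal ≤ ∫ t in II, |v (x.1, t)| :=
        setIntegral_ge_of_const_le_real measII' (by rw [measII]; exact ENNReal.one_ne_top)
          (fun t ht => (hcase t ht).le) hvint
      rw [measII] at hge
      simp only [ENNReal.toReal_one, mul_one] at hge
      linarith
    · push_neg at hcase
      obtain ⟨t₀, ht₀I, ht₀⟩ := hcase
      have hdc : ContinuousOn (fun p : ℝ × ℝ => fderiv ℝ v p) (interior Qsq) :=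
        (hC1.mono interior_subset).continuousOn_fderiv_of_isOpen isOpen_interior le_rfl
      set d : ℝ → ℝ := fun t => fderiv ℝ v (x.1, t) (0, 1) with hd
      have hmaps : ∀ t ∈ Ioo (-(1/2) : ℝ) (1/2), ((x.1, t) : ℝ × ℝ) ∈ interior Qsq := by
        intro t ht
        rw [interior_Qsq]
        exact ⟨hx₁, ht⟩
      have hdcont : ContinuousOn d (Ioo (-(1/2) : ℝ) (1/2)) := by
        have h1 : ContinuousOn (fun t : ℝ => fderiv ℝ v (x.1, t)) (Ioo (-(1/2) : ℝ) (1/2)) :=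
          hdc.comp ((Continuous.prodMk_right x.1).continuousOn) hmaps
        exact h1.clm_apply continuousOn_const
      have hderiv : ∀ t ∈ Ioo (-(1/2) : ℝ) (1/2),
          HasDerivAt (fun s => v (x.1, s)) (d t) t := by
        intro t ht
        have hdiff : DifferentiableAt ℝ v (x.1, t) :=
          (hC1.contDiffAt (mem_interior_iff_mem_nhds.mp (hmaps t ht))).differentiableAt one_ne_zero
        have hcurve : HasDerivAt (fun s : ℝ => ((x.1 : ℝ), s)) ((0 : ℝ), (1 : ℝ)) t :=
          (hasDerivAt_const t x.1).prodMk (hasDerivAt_id t)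
        exact hdiff.hasFDerivAt.comp_hasDerivAt t hcurve
      have hdbound : ∀ t, |d t| ≤ ‖fderiv ℝ v (x.1, t)‖ := by
        intro t
        calc |d t| ≤ ‖fderiv ℝ v (x.1, t)‖ * ‖((0 : ℝ), (1 : ℝ))‖ :=
              (fderiv ℝ v (x.1, t)).le_opNorm _
          _ = ‖fderiv ℝ v (x.1, t)‖ := by
              rw [Prod.norm_def]
              simp
      have hmainest : ∀ a b : ℝ, a ∈ II → b ∈ II → a ≤ b →
          Δ / 2 ≤ |v (x.1, b) - v (x.1, a)| → Δ / 2 ≤ g x.1 := by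
        intro a b haI hbI hab habs
        have hIooab : Ioo a b ⊆ Ioo (-(1/2) : ℝ) (1/2) := Ioo_subset_Ioo haI.1 hbI.2
        have hIccab : Icc a b ⊆ II := Icc_subset_Icc haI.1 hbI.2
        have hfd_ab : IntegrableOn (fun t => ‖fderiv ℝ v (x.1, t)‖) (Ioo a b) :=
          hfdint.mono_set (Ioo_subset_Icc_self.trans hIccab)
        have hmi : IntegrableOn d (Ioo a b) := by
          refine Integrable.mono' hfd_ab
            ((hdcont.mono hIooab).aestronglyMeasurable measurableSet_Ioo) ?_
          filter_upwards [ae_restrict_mem measurableSet_Ioo] with t _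
          simpa [Real.norm_eq_abs] using hdbound t
        have hdioc : IntegrableOn d (Ioc a b) volume :=
          IntegrableOn.congr_set_ae (μ := volume) (f := d) (t := Ioo a b)
            (s := Ioc a b) hmi (Ioo_ae_eq_Ioc (μ := volume) (a := a) (b := b)).symm
        have hdint : IntervalIntegrable d volume a b :=
          (intervalIntegrable_iff_integrableOn_Ioc_of_le hab).mpr hdioc
        have hcontab : ContinuousOn (fun s => v (x.1, s)) (Icc a b) := hvx.mono hIccab
        have hftc : ∫ t in a..b, d t = v (x.1, b) - v (x.1, a) :=
          intervalIntegral.integral_eq_sub_of_hasDerivAt_of_le hab hcontab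
            (fun t ht => hderiv t (hIooab ht)) hdint
        have hfdii : IntervalIntegrable (fun t => ‖fderiv ℝ v (x.1, t)‖) volume a b :=
          (intervalIntegrable_iff_integrableOn_Ioc_of_le hab).mpr
            (hfdint.mono_set (Ioc_subset_Icc_self.trans hIccab))
        calc Δ / 2 ≤ |v (x.1, b) - v (x.1, a)| := habs
          _ = |∫ t in a..b, d t| := by rw [hftc]
          _ ≤ ∫ t in a..b, |d t| := intervalIntegral.abs_integral_le_integral_abs hab
          _ ≤ ∫ t in a..b, ‖fderiv ℝ v (x.1, t)‖ :=
              intervalIntegral.integral_mono_on hab hdint.abs hfdii (fun t _ => hdbound t)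
          _ = ∫ t in Ioc a b, ‖fderiv ℝ v (x.1, t)‖ := intervalIntegral.integral_of_le hab
          _ ≤ ∫ t in II, ‖fderiv ℝ v (x.1, t)‖ := by
              apply setIntegral_mono_set hfdint
              · filter_upwards with t using norm_nonneg _
              · exact HasSubset.Subset.eventuallyLE (Ioc_subset_Icc_self.trans hIccab)
          _ ≤ g x.1 := hintle
      have hvv : v (x.1, x.2) = v x := by rw [Prod.mk.eta]
      rcases le_total t₀ x.2 with h | h
      · refine hmainest t₀ x.2 ht₀I hx2II h ?_
        have h1 := abs_sub_abs_le_abs_sub (v (x.1, x.2)) (v (x.1, t₀))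
        rw [hvv] at h1 ⊢
        linarith
      · refine hmainest x.2 t₀ hx2II ht₀I h ?_
        rw [abs_sub_comm]
        have h1 := abs_sub_abs_le_abs_sub (v (x.1, x.2)) (v (x.1, t₀))
        rw [hvv] at h1 ⊢
        linarith
  -- conclude via Markov
  set S := Prod.fst '' {x ∈ Qsq | Δ < |v x|} with hSdef
  have hSI : S ⊆ II := by
    rintro _ ⟨x, ⟨hxQ, _⟩, rfl⟩
    rw [Qsq_eq] at hxQ
    exact hxQ.1
  have hvolS : volume S = μI S := by
    rw [hμI, Measure.restrict_apply' measII', inter_eq_self_of_subset_left hSI]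
  have hmono : μI S ≤ μI {x₁ | Δ / 2 ≤ g x₁} := by
    apply measure_mono_ae
    filter_upwards [hmain] with x₁ h hx₁S
    exact h hx₁S
  have hfin : μI {x₁ | Δ / 2 ≤ g x₁} ≠ ⊤ := by
    apply ne_of_lt
    apply lt_of_le_of_lt (measure_mono (subset_univ _))
    rw [hμI, Measure.restrict_apply_univ, measII]
    exact ENNReal.one_lt_top
  have hmarkov := mul_meas_ge_le_integral_of_nonneg (μ := μI) (f := g)
    (Filter.Eventually.of_forall hg0) hgint (Δ / 2)
  calc volume S = μI S := hvolS
    _ ≤ μI {x₁ | Δ / 2 ≤ g x₁} := hmono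
    _ = ENNReal.ofReal ((μI {x₁ | Δ / 2 ≤ g x₁}).toReal) := (ENNReal.ofReal_toReal hfin).symm
    _ ≤ ENNReal.ofReal ((2 / Δ) * ∫ x in Qsq, F x) := by
        apply ENNReal.ofReal_le_ofReal
        set m := (μI {x₁ | Δ / 2 ≤ g x₁}).toReal with hm
        have hmrw : m = (2 / Δ) * (Δ / 2 * m) := by field_simp
        rw [hmrw, hFub]
        exact mul_le_mul_of_nonneg_left hmarkov (by positivity)

end

end Stmt18Aux

theorem stmt18 (v : ℕ → ℝ × ℝ → ℝ) (Δ : ℝ) (hΔ : 0 < Δ)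
    (hC1 : ∀ j, ContDiffOn ℝ 1 (v j) Qsq)
    (hW11 : Tendsto (fun j => ∫ x in Qsq, (|v j x| + ‖fderiv ℝ (v j) x‖))
      atTop (nhds 0)) :
    Tendsto (fun j => volume (Prod.fst '' {x ∈ Qsq | Δ < |v j x|}))
      atTop (nhds 0) := by
  have hb : ∀ j, volume (Prod.fst '' {x ∈ Qsq | Δ < |v j x|}) ≤
      ENNReal.ofReal ((2 / Δ) * ∫ x in Qsq, (|v j x| + ‖fderiv ℝ (v j) x‖)) :=
    fun j => Stmt18Aux.key (v j) hΔ (hC1 j)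
  have h1 : Tendsto (fun j => (2 / Δ) * ∫ x in Qsq, (|v j x| + ‖fderiv ℝ (v j) x‖))
      atTop (nhds 0) := by
    simpa using hW11.const_mul (2 / Δ)
  have hub : Tendsto
      (fun j => ENNReal.ofReal ((2 / Δ) * ∫ x in Qsq, (|v j x| + ‖fderiv ℝ (v j) x‖)))
      atTop (nhds 0) := by
    simpa using ENNReal.tendsto_ofReal h1
  exact tendsto_of_tendsto_of_tendsto_of_le_of_le tendsto_const_nhds hub
    (fun j => zero_le) hb
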